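/- arXiv:0905.4900 — 10 statements merged into one kernel-verified Lean document; each statement's English description precedes it below -/
import Mathlib

section
/- The Faulkner map D is surjective onto 𝔤: the linear span of {D(v,w) : v,w ∈ V} equals 𝔤. -/
attribute [local instance 100] LieRing.ofAssociativeRing

/-- The Faulkner map D is surjective onto 𝔤: the span of its image is all of 𝔤. -/
theorem faulkner_D_surjective
    {g V : Type*} [LieRing g] [LieAlgebra ℝ g]
    [AddCommGroup V] [Module ℝ V]
    [FiniteDimensional ℝ g] [FiniteDimensional ℝ V]
    -- the ad-invariant nondegenerate symmetric bilinear form on 𝔤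
    (B : g →ₗ[ℝ] g →ₗ[ℝ] ℝ)
    (hBsymm : ∀ X Y : g, B X Y = B Y X)
    (hBnondeg : ∀ X : g, (∀ Y : g, B X Y = 0) → X = 0)
    (hBinv : ∀ X Y Z : g, B ⁅X, Y⁆ Z + B Y ⁅X, Z⁆ = 0)
    -- the faithful representation of 𝔤 on V
    (ρ : g →ₗ⁅ℝ⁆ Module.End ℝ V)
    (hfaithful : Function.Injective ρ)
    -- the 𝔤-invariant nondegenerate symmetric bilinear form on V
    (ip : V →ₗ[ℝ] V →ₗ[ℝ] ℝ)
    (hipsymm : ∀ v w : V, ip v w = ip w v)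
    (hipnondeg : ∀ v : V, (∀ w : V, ip v w = 0) → v = 0)
    (hipinv : ∀ (X : g) (v w : V), ip (ρ X v) w + ip v (ρ X w) = 0)
    -- the Faulkner map D, defined by transposing the 𝔤-action
    (D : V →ₗ[ℝ] V →ₗ[ℝ] g)
    (hD : ∀ (v w : V) (X : g), B (D v w) X = ip (ρ X v) w) :
    Submodule.span ℝ {X : g | ∃ v w : V, D v w = X} = ⊤ := by
  by_contra h
  obtain ⟨φ, hφne, hφ⟩ := Submodule.exists_dual_map_eq_bot_of_lt_top
    (lt_top_iff_ne_top.mpr h) inferInstance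
  -- B is injective, hence surjective onto the dual
  have hBinj : Function.Injective B := by
    rw [injective_iff_map_eq_zero]
    intro X hX
    exact hBnondeg X fun Y => by rw [hX]; rfl
  have hBsurj : Function.Surjective B :=
    (LinearMap.injective_iff_surjective_of_finrank_eq_finrank
      Subspace.dual_finrank_eq.symm).mp hBinj
  obtain ⟨X, hX⟩ := hBsurj φ
  have hφ0 : ∀ x ∈ Submodule.span ℝ {X : g | ∃ v w : V, D v w = X}, φ x = 0 := by
    intro x hx
    have : φ x ∈ Submodule.map φ (Submodule.span ℝ {X : g | ∃ v w : V, D v w = X}) :=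
      Submodule.mem_map_of_mem hx
    rw [hφ] at this
    simpa using this
  have hρX : ∀ v : V, ρ X v = 0 := by
    intro v
    apply hipnondeg
    intro w
    have := hD v w X
    rw [hBsymm, hX] at this
    rw [← this]
    exact hφ0 _ (Submodule.subset_span ⟨v, w, rfl⟩)
  have : X = 0 := hfaithful (by ext v; simp [hρX v])
  apply hφne
  rw [← hX, this, map_zero]
end

section
/- The 3-bracket satisfies the orthogonality condition ⟨[x,y,z],w⟩ = −⟨z,[x,y,w]⟩ and the symmetry condition ⟨[x,y,z],w⟩ = ⟨[z,w,x],y⟩ for all x,y,z,w ∈ V. -/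
attribute [local instance] LieRing.ofAssociativeRing

/-- The 3-bracket [x,y,z] := D(x,y)·z satisfies the orthogonality condition ⟨[x,y,z],w⟩ = -⟨z,[x,y,w]⟩ and the symmetry condition ⟨[x,y,z],w⟩ = ⟨[z,w,x],y⟩. -/
theorem faulkner_bracket_orthogonality_symmetry
    {g V : Type*} [LieRing g] [LieAlgebra ℝ g]
    [AddCommGroup V] [Module ℝ V]
    [FiniteDimensional ℝ g] [FiniteDimensional ℝ V]
    -- the ad-invariant nondegenerate symmetric bilinear form on 𝔤
    (B : g →ₗ[ℝ] g →ₗ[ℝ] ℝ)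
    (hBsymm : ∀ X Y : g, B X Y = B Y X)
    (hBnondeg : ∀ X : g, (∀ Y : g, B X Y = 0) → X = 0)
    (hBinv : ∀ X Y Z : g, B ⁅X, Y⁆ Z + B Y ⁅X, Z⁆ = 0)
    -- the faithful representation of 𝔤 on V
    (ρ : g →ₗ⁅ℝ⁆ Module.End ℝ V)
    (hfaithful : Function.Injective ρ)
    -- the 𝔤-invariant nondegenerate symmetric bilinear form on V
    (ip : V →ₗ[ℝ] V →ₗ[ℝ] ℝ)
    (hipsymm : ∀ v w : V, ip v w = ip w v)
    (hipnondeg : ∀ v : V, (∀ w : V, ip v w = 0) → v = 0)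
    (hipinv : ∀ (X : g) (v w : V), ip (ρ X v) w + ip v (ρ X w) = 0)
    -- the Faulkner map D, defined by transposing the 𝔤-action
    (D : V →ₗ[ℝ] V →ₗ[ℝ] g)
    (hD : ∀ (v w : V) (X : g), B (D v w) X = ip (ρ X v) w) :
    ∀ x y z w : V, ip (ρ (D x y) z) w = - ip z (ρ (D x y) w) ∧ ip (ρ (D x y) z) w = ip (ρ (D z w) x) y := by
  intro x y z w
  constructor
  · have := hipinv (D x y) z w
    linarith
  · have h1 := hD z w (D x y)
    have h2 := hD x y (D z w)
    rw [← h1, ← h2, hBsymm]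
end

section
/- The 3-bracket satisfies the fundamental identity [x,y,[v,w,z]] − [v,w,[x,y,z]] = [[x,y,v],w,z] + [v,[x,y,w],z] for all x,y,v,w,z ∈ V. -/
attribute [local instance 100] LieRing.ofAssociativeRing

/-- The 3-bracket [x,y,z] := D(x,y)·z satisfies the fundamental identity [x,y,[v,w,z]] - [v,w,[x,y,z]] = [[x,y,v],w,z] + [v,[x,y,w],z]. -/
theorem faulkner_fundamental_identity
    {g V : Type*} [LieRing g] [LieAlgebra ℝ g]
    [AddCommGroup V] [Module ℝ V]
    [FiniteDimensional ℝ g] [FiniteDimensional ℝ V]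
    -- the ad-invariant nondegenerate symmetric bilinear form on 𝔤
    (B : g →ₗ[ℝ] g →ₗ[ℝ] ℝ)
    (hBsymm : ∀ X Y : g, B X Y = B Y X)
    (hBnondeg : ∀ X : g, (∀ Y : g, B X Y = 0) → X = 0)
    (hBinv : ∀ X Y Z : g, B ⁅X, Y⁆ Z + B Y ⁅X, Z⁆ = 0)
    -- the faithful representation of 𝔤 on V
    (ρ : g →ₗ⁅ℝ⁆ Module.End ℝ V)
    (hfaithful : Function.Injective ρ)
    -- the 𝔤-invariant nondegenerate symmetric bilinear form on V
    (ip : V →ₗ[ℝ] V →ₗ[ℝ] ℝ)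
    (hipsymm : ∀ v w : V, ip v w = ip w v)
    (hipnondeg : ∀ v : V, (∀ w : V, ip v w = 0) → v = 0)
    (hipinv : ∀ (X : g) (v w : V), ip (ρ X v) w + ip v (ρ X w) = 0)
    -- the Faulkner map D, defined by transposing the 𝔤-action
    (D : V →ₗ[ℝ] V →ₗ[ℝ] g)
    (hD : ∀ (v w : V) (X : g), B (D v w) X = ip (ρ X v) w) :
    ∀ x y v w z : V, ρ (D x y) (ρ (D v w) z) - ρ (D v w) (ρ (D x y) z) = ρ (D (ρ (D x y) v) w) z + ρ (D v (ρ (D x y) w)) z := by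
  -- equivariance of D
  have hequiv : ∀ (X : g) (v w : V), ⁅X, D v w⁆ = D (ρ X v) w + D v (ρ X w) := by
    intro X v w
    have h : ∀ Y : g, B (⁅X, D v w⁆ - (D (ρ X v) w + D v (ρ X w))) Y = 0 := by
      intro Y
      have h1 : B ⁅X, D v w⁆ Y = - B (D v w) ⁅X, Y⁆ := by
        have := hBinv X (D v w) Y; linarith [hBsymm ⁅X, D v w⁆ Y, hBsymm (D v w) ⁅X, Y⁆,
          hBinv X Y (D v w)]
      have h2 : B (D v w) ⁅X, Y⁆ = ip (ρ ⁅X, Y⁆ v) w := hD v w ⁅X, Y⁆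
      have h3 : B (D (ρ X v) w) Y = ip (ρ Y (ρ X v)) w := hD (ρ X v) w Y
      have h4 : B (D v (ρ X w)) Y = ip (ρ Y v) (ρ X w) := hD v (ρ X w) Y
      have h5 : ρ ⁅X, Y⁆ v = ρ X (ρ Y v) - ρ Y (ρ X v) := by
        have := ρ.map_lie X Y
        rw [this]
        simp [Module.End.lie_apply]
      have h6 : ip (ρ Y v) (ρ X w) = - ip (ρ X (ρ Y v)) w := by
        have := hipinv X (ρ Y v) w; linarith
      simp only [map_sub, LinearMap.sub_apply, map_add, LinearMap.add_apply]
      rw [h1, h2, h3, h4, h5, h6]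
      simp only [map_sub, LinearMap.sub_apply]
      ring
    exact sub_eq_zero.mp (hBnondeg _ h)
  intro x y v w z
  have h := congrArg (ρ ·) (hequiv (D x y) v w)
  simp only [map_add, LieHom.map_lie] at h
  have h2 := LinearMap.congr_fun h z
  simp only [Module.End.lie_apply, map_add, LinearMap.add_apply, LinearMap.sub_apply] at h2
  simpa using h2
end

section
/- If W ⊆ V is a 𝔤-submodule and W^⊥ its orthogonal complement, then the Lie triple system V decomposes as the perpendicular direct sum of the ideals W and W^⊥: [x,y,z] ∈ W whenever x,y,z ∈ W, [x,y,z] ∈ W^⊥ whenever x,y,z ∈ W^⊥, and [x,y,z] = 0 whenever at least one of x,y,z lies in W and at least one lies in W^⊥. -/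
attribute [local instance 100] LieRing.ofAssociativeRing

/-- A 𝔤-submodule W and its orthogonal complement W^⊥ decompose the positive-definite Lie triple system V into a perpendicular direct sum of ideals. -/
theorem lts_decomposes_along_submodule
    {g V : Type*} [LieRing g] [LieAlgebra ℝ g]
    [AddCommGroup V] [Module ℝ V]
    [FiniteDimensional ℝ g] [FiniteDimensional ℝ V]
    -- the ad-invariant nondegenerate symmetric bilinear form on 𝔤
    (B : g →ₗ[ℝ] g →ₗ[ℝ] ℝ)
    (hBsymm : ∀ X Y : g, B X Y = B Y X)
    (hBnondeg : ∀ X : g, (∀ Y : g, B X Y = 0) → X = 0)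
    (hBinv : ∀ X Y Z : g, B ⁅X, Y⁆ Z + B Y ⁅X, Z⁆ = 0)
    -- the faithful representation of 𝔤 on V
    (ρ : g →ₗ⁅ℝ⁆ Module.End ℝ V)
    (hfaithful : Function.Injective ρ)
    -- the 𝔤-invariant positive-definite symmetric bilinear form on V
    (ip : V →ₗ[ℝ] V →ₗ[ℝ] ℝ)
    (hipsymm : ∀ v w : V, ip v w = ip w v)
    (hippos : ∀ v : V, v ≠ 0 → 0 < ip v v)
    (hipinv : ∀ (X : g) (v w : V), ip (ρ X v) w + ip v (ρ X w) = 0)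
    -- the Faulkner map D, defined by transposing the 𝔤-action
    (D : V →ₗ[ℝ] V →ₗ[ℝ] g)
    (hD : ∀ (v w : V) (X : g), B (D v w) X = ip (ρ X v) w)
    -- cyclicity: [x,y,z] + [y,z,x] + [z,x,y] = 0 (Lie triple system condition)
    (hcyc : ∀ x y z : V, ρ (D x y) z + ρ (D y z) x + ρ (D z x) y = 0) :
    ∀ W : Submodule ℝ V, (∀ (X : g), ∀ w ∈ W, ρ X w ∈ W) →
      -- [x,y,z] ∈ W whenever x,y,z ∈ W
      (∀ x y z : V, x ∈ W → y ∈ W → z ∈ W → ρ (D x y) z ∈ W) ∧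
      -- [x,y,z] ∈ W^⊥ whenever x,y,z ∈ W^⊥
      (∀ x y z : V, (∀ u ∈ W, ip u x = 0) → (∀ u ∈ W, ip u y = 0) →
        (∀ u ∈ W, ip u z = 0) → ∀ u ∈ W, ip u (ρ (D x y) z) = 0) ∧
      -- [x,y,z] = 0 whenever at least one of x,y,z lies in W and at least one in W^⊥
      (∀ x y z : V, (x ∈ W ∨ y ∈ W ∨ z ∈ W) →
        ((∀ u ∈ W, ip u x = 0) ∨ (∀ u ∈ W, ip u y = 0) ∨ (∀ u ∈ W, ip u z = 0)) →
        ρ (D x y) z = 0) := by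
  intro W hW
  -- D v w = 0 when v ∈ W and w ⊥ W
  have key : ∀ v w : V, v ∈ W → (∀ u ∈ W, ip u w = 0) → D v w = 0 := by
    intro v w hv hw
    apply hBnondeg
    intro Y
    rw [hD]
    exact hw _ (hW Y v hv)
  -- D w v = 0 when v ∈ W and w ⊥ W
  have key2 : ∀ v w : V, v ∈ W → (∀ u ∈ W, ip u w = 0) → D w v = 0 := by
    intro v w hv hw
    apply hBnondeg
    intro Y
    rw [hD]
    have h1 := hipinv Y w v
    have h2 : ip w (ρ Y v) = ip (ρ Y v) w := hipsymm _ _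
    have h3 : ip (ρ Y v) w = 0 := hw _ (hW Y v hv)
    linarith
  -- v ∈ W and v ⊥ W implies v = 0
  have zero : ∀ v : V, v ∈ W → (∀ u ∈ W, ip u v = 0) → v = 0 := by
    intro v hv hperp
    by_contra h
    exact absurd (hperp v hv) (ne_of_gt (hippos v h))
  -- vanishing via cyclicity
  have cycz : ∀ x y z : V, D y z = 0 → D z x = 0 → ρ (D x y) z = 0 := by
    intro x y z h1 h2
    have := hcyc x y z
    rw [h1, h2] at this
    simpa using this
  -- orthogonal decomposition of V
  have decomp : ∀ y : V, ∃ a b : V, a ∈ W ∧ (∀ u ∈ W, ip u b = 0) ∧ y = a + b := by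
    have hrefl : (ip : LinearMap.BilinForm ℝ V).IsRefl := by
      intro x y h; rw [hipsymm]; exact h
    have hnd : (LinearMap.BilinForm.restrict (ip : LinearMap.BilinForm ℝ V) W).Nondegenerate := by
      refine (LinearMap.IsRefl.nondegenerate_iff_separatingLeft (fun x y h => by
        simpa [LinearMap.BilinForm.restrict_apply, hipsymm] using h)).2 ?_
      intro ⟨x, hx⟩ h
      ext
      by_contra hne
      have := h ⟨x, hx⟩
      simp only [LinearMap.BilinForm.restrict_apply, LinearMap.domRestrict_apply] at this
      exact absurd this (ne_of_gt (hippos x hne))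
    have hcompl := LinearMap.BilinForm.isCompl_orthogonal_of_restrict_nondegenerate
      (B := (ip : LinearMap.BilinForm ℝ V)) (W := W) hrefl hnd
    intro y
    have hy : y ∈ W ⊔ LinearMap.BilinForm.orthogonal (ip : LinearMap.BilinForm ℝ V) W := by
      rw [hcompl.sup_eq_top]; trivial
    obtain ⟨a, ha, b, hb, hab⟩ := Submodule.mem_sup.mp hy
    exact ⟨a, b, ha, fun u hu => hb u hu, hab.symm⟩
  -- main mixed lemma
  have mixed : ∀ x y z : V, (x ∈ W ∨ y ∈ W ∨ z ∈ W) →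
      ((∀ u ∈ W, ip u x = 0) ∨ (∀ u ∈ W, ip u y = 0) ∨ (∀ u ∈ W, ip u z = 0)) →
      ρ (D x y) z = 0 := by
    intro x y z h1 h2
    rcases h1 with hx | hy | hz
    · rcases h2 with px | py | pz
      · rw [zero x hx px]; simp
      · rw [key x y hx py]; simp
      · -- x ∈ W, z ⊥ W : decompose y
        obtain ⟨a, b, ha, hb, rfl⟩ := decomp y
        have e1 : ρ (D x a) z = 0 := cycz x a z (key a z ha pz) (key2 x z hx pz)
        have e2 : D x b = 0 := key x b hx hb
        have hsplit : D x (a + b) = D x a + D x b := map_add _ _ _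
        rw [hsplit, map_add ρ, LinearMap.add_apply, e1, e2]
        simp
    · rcases h2 with px | py | pz
      · rw [key2 y x hy px]; simp
      · rw [zero y hy py]; simp
      · -- y ∈ W, z ⊥ W : decompose x
        obtain ⟨a, b, ha, hb, rfl⟩ := decomp x
        have e1 : ρ (D a y) z = 0 := cycz a y z (key y z hy pz) (key2 a z ha pz)
        have e2 : D b y = 0 := key2 y b hy hb
        have hsplit : D (a + b) y = D a y + D b y := by rw [map_add]; rfl
        rw [hsplit, map_add ρ, LinearMap.add_apply, e1, e2]
        simp
    · rcases h2 with px | py | pz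
      · -- z ∈ W, x ⊥ W : decompose y
        obtain ⟨a, b, ha, hb, rfl⟩ := decomp y
        have e1 : D x a = 0 := key2 a x ha px
        have e2 : ρ (D x b) z = 0 := cycz x b z (key2 z b hz hb) (key z x hz px)
        have hsplit : D x (a + b) = D x a + D x b := map_add _ _ _
        rw [hsplit, map_add ρ, LinearMap.add_apply, e1, e2]
        simp
      · -- z ∈ W, y ⊥ W : decompose x
        obtain ⟨a, b, ha, hb, rfl⟩ := decomp x
        have e1 : D a y = 0 := key a y ha py
        have e2 : ρ (D b y) z = 0 := cycz b y z (key2 z y hz py) (key z b hz hb)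
        have hsplit : D (a + b) y = D a y + D b y := by rw [map_add]; rfl
        rw [hsplit, map_add ρ, LinearMap.add_apply, e1, e2]
        simp
      · rw [zero z hz pz]; simp
  refine ⟨?_, ?_, mixed⟩
  · intro x y z _ _ hz
    exact hW _ z hz
  · intro x y z hx hy hz u hu
    have h1 := hipinv (D x y) u z
    have h2 : ip (ρ (D x y) u) z = 0 := hz _ (hW _ u hu)
    have h3 : ip u (ρ (D x y) z) = ip (ρ (D x y) z) u := hipsymm _ _
    -- ip (ρ X u) z + ip u (ρ X z) = 0
    linarith
end

section
/- A subspace U ⊆ V is an ideal of the Lie triple system if and only if U is a 𝔤-submodule of V. Consequently, V is irreducible as a 𝔤-module if and only if the Lie triple system V has no ideals other than 0 and V. (This is the equivalence (1)⟺(2) of Theorem 3.1.) -/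
attribute [local instance 100] LieRing.ofAssociativeRing

/-- A subspace U ⊆ V is an ideal of the Lie triple system iff it is a 𝔤-submodule; consequently V is irreducible as a 𝔤-module iff the Lie triple system V has no ideals other than 0 and V.  (Equivalence (1) ⟺ (2) of Theorem 3.1.) -/
theorem lts_ideal_iff_submodule
    {g V : Type*} [LieRing g] [LieAlgebra ℝ g]
    [AddCommGroup V] [Module ℝ V]
    [FiniteDimensional ℝ g] [FiniteDimensional ℝ V]
    -- the ad-invariant nondegenerate symmetric bilinear form on 𝔤
    (B : g →ₗ[ℝ] g →ₗ[ℝ] ℝ)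
    (hBsymm : ∀ X Y : g, B X Y = B Y X)
    (hBnondeg : ∀ X : g, (∀ Y : g, B X Y = 0) → X = 0)
    (hBinv : ∀ X Y Z : g, B ⁅X, Y⁆ Z + B Y ⁅X, Z⁆ = 0)
    -- the faithful representation of 𝔤 on V
    (ρ : g →ₗ⁅ℝ⁆ Module.End ℝ V)
    (hfaithful : Function.Injective ρ)
    -- the 𝔤-invariant positive-definite symmetric bilinear form on V
    (ip : V →ₗ[ℝ] V →ₗ[ℝ] ℝ)
    (hipsymm : ∀ v w : V, ip v w = ip w v)
    (hippos : ∀ v : V, v ≠ 0 → 0 < ip v v)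
    (hipinv : ∀ (X : g) (v w : V), ip (ρ X v) w + ip v (ρ X w) = 0)
    -- the Faulkner map D, defined by transposing the 𝔤-action
    (D : V →ₗ[ℝ] V →ₗ[ℝ] g)
    (hD : ∀ (v w : V) (X : g), B (D v w) X = ip (ρ X v) w)
    -- cyclicity: [x,y,z] + [y,z,x] + [z,x,y] = 0 (Lie triple system condition)
    (hcyc : ∀ x y z : V, ρ (D x y) z + ρ (D y z) x + ρ (D z x) y = 0) :
    (∀ U : Submodule ℝ V,
        ((∀ u ∈ U, ∀ x y : V, ρ (D u x) y ∈ U) ∧ (∀ x y : V, ∀ u ∈ U, ρ (D x y) u ∈ U))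
          ↔ (∀ (X : g), ∀ u ∈ U, ρ X u ∈ U)) ∧
      ((∀ U : Submodule ℝ V, (∀ (X : g), ∀ u ∈ U, ρ X u ∈ U) → U = ⊥ ∨ U = ⊤)
        ↔ (∀ U : Submodule ℝ V,
            ((∀ u ∈ U, ∀ x y : V, ρ (D u x) y ∈ U) ∧ (∀ x y : V, ∀ u ∈ U, ρ (D x y) u ∈ U))
              → U = ⊥ ∨ U = ⊤)) := by
  -- ip v v = 0 → v = 0
  have hdef : ∀ v : V, ip v v = 0 → v = 0 := by
    intro v hv
    by_contra h
    exact absurd hv (ne_of_gt (hippos v h))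
  have hiprefl : LinearMap.BilinForm.IsRefl (ip : LinearMap.BilinForm ℝ V) := by
    intro x y h; rwa [hipsymm]
  -- nondegeneracy of ip on the whole space
  have hipnd : ∀ v : V, (∀ w : V, ip v w = 0) → v = 0 := fun v hv => hdef v (hv v)
  have key : ∀ U : Submodule ℝ V,
      ((∀ u ∈ U, ∀ x y : V, ρ (D u x) y ∈ U) ∧ (∀ x y : V, ∀ u ∈ U, ρ (D x y) u ∈ U))
        ↔ (∀ (X : g), ∀ u ∈ U, ρ X u ∈ U) := by
    intro U
    set W := LinearMap.BilinForm.orthogonal (ip : LinearMap.BilinForm ℝ V) U with hW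
    have hmemW : ∀ w : V, w ∈ W ↔ ∀ n ∈ U, ip n w = 0 := fun w => Iff.rfl
    have hrestr : (LinearMap.BilinForm.restrict (ip : LinearMap.BilinForm ℝ V) U).Nondegenerate := by
      refine ⟨?_, ?_⟩ <;>
      · rintro ⟨x, hx⟩ h
        have := h ⟨x, hx⟩
        simp only [LinearMap.BilinForm.restrict_apply, LinearMap.domRestrict_apply] at this
        exact Subtype.ext (hdef x this)
    have hcompl : IsCompl U W :=
      LinearMap.BilinForm.isCompl_orthogonal_of_restrict_nondegenerate hiprefl hrestr
    -- membership criterion: x ∈ U iff x ⟂ W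
    have hmemU : ∀ x : V, (∀ w ∈ W, ip x w = 0) → x ∈ U := by
      intro x hx
      have hx' : x ∈ U ⊔ W := by rw [hcompl.sup_eq_top]; trivial
      obtain ⟨u, hu, w, hw, rfl⟩ := Submodule.mem_sup.mp hx'
      have h1 : ip (u + w) w = 0 := hx w hw
      have h2 : ip u w = 0 := (hmemW w).mp hw u hu
      have h3 : ip w w = 0 := by
        have := ip.map_add u w
        have expand : ip (u + w) w = ip u w + ip w w := by
          rw [map_add]; simp
        rw [expand, h2, zero_add] at h1
        exact h1
      rw [hdef w h3, add_zero]
      exact hu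
    constructor
    · rintro ⟨h1, h2⟩ X u hu
      -- show D u w = 0 for all w ∈ W, using faithfulness
      have hDuw : ∀ w ∈ W, D u w = 0 := by
        intro w hw
        apply hfaithful
        rw [map_zero]
        apply LinearMap.ext
        intro a
        rw [LinearMap.zero_apply]
        apply hipnd
        intro b
        have e1 : B (D a b) (D u w) = ip (ρ (D u w) a) b := hD a b (D u w)
        have e2 : B (D u w) (D a b) = ip (ρ (D a b) u) w := hD u w (D a b)
        have e3 : ip (ρ (D a b) u) w = 0 := (hmemW w).mp hw _ (h2 a b u hu)
        rw [← e1, hBsymm, e2, e3]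
      apply hmemU
      intro w hw
      have := hD u w X
      rw [hDuw w hw] at this
      simp at this
      rw [hipsymm] at this
      · rw [hipsymm]; exact this.symm
    · intro hsub
      -- D u w = 0 for u ∈ U, w ∈ W
      have hA : ∀ u ∈ U, ∀ w ∈ W, D u w = 0 := by
        intro u hu w hw
        apply hBnondeg
        intro X
        rw [hD u w X]
        exact (hmemW w).mp hw _ (hsub X u hu)
      have hB' : ∀ w ∈ W, ∀ u ∈ U, D w u = 0 := by
        intro w hw u hu
        apply hBnondeg
        intro X
        rw [hD w u X]
        have h1 := hipinv X w u
        have h2 : ip w (ρ X u) = 0 := by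
          rw [hipsymm]; exact (hmemW w).mp hw _ (hsub X u hu)
        linarith
      refine ⟨?_, fun x y u hu => hsub (D x y) u hu⟩
      intro u hu x y
      -- decompose x and y
      have hx : x ∈ U ⊔ W := by rw [hcompl.sup_eq_top]; trivial
      have hy : y ∈ U ⊔ W := by rw [hcompl.sup_eq_top]; trivial
      obtain ⟨x₁, hx₁, x₂, hx₂, rfl⟩ := Submodule.mem_sup.mp hx
      obtain ⟨y₁, hy₁, y₂, hy₂, rfl⟩ := Submodule.mem_sup.mp hy
      have hDux : D u (x₁ + x₂) = D u x₁ := by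
        rw [map_add, hA u hu x₂ hx₂, add_zero]
      rw [hDux]
      have hzero : ρ (D u x₁) y₂ = 0 := by
        have hc := hcyc x₁ y₂ u
        rw [hA x₁ hx₁ y₂ hy₂, hB' y₂ hy₂ u hu] at hc
        simpa using hc
      have : ρ (D u x₁) (y₁ + y₂) = ρ (D u x₁) y₁ + ρ (D u x₁) y₂ := map_add _ _ _
      rw [this, hzero, add_zero]
      exact hsub (D u x₁) y₁ hy₁
  refine ⟨key, ?_⟩
  constructor
  · intro h U hU
    exact h U ((key U).mp hU)
  · intro h U hU
    exact h U ((key U).mpr hU)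
end

section
/- If W ⊆ V is a 𝔤-submodule with 0 ≠ W ≠ V, then I := span{D(w,w′) : w,w′ ∈ W} ⊕ W is a Lie ideal of the Lie algebra 𝔨 = 𝔤 ⊕ V which is homogeneous (I = (I ∩ 𝔤) ⊕ (I ∩ V)) and proper (I ≠ 0 and I ≠ 𝔨). (This is the contrapositive of the implication (3)⟹(1) of Theorem 3.1.) -/
variable {g V : Type*} [LieRing g] [LieAlgebra ℝ g] [AddCommGroup V] [Module ℝ V]

attribute [local instance 100] LieRing.ofAssociativeRing

/-- The bracket on the embedding Lie algebra 𝔨 = 𝔤 ⊕ V: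
`[(X,v),(Y,w)] = ([X,Y] + D(v,w), X·w - Y·v)`. -/
def kBracket (ρ : g →ₗ⁅ℝ⁆ Module.End ℝ V) (D : V →ₗ[ℝ] V →ₗ[ℝ] g)
    (p q : g × V) : g × V :=
  (⁅p.1, q.1⁆ + D p.2 q.2, ρ p.1 q.2 - ρ q.1 p.2)

/-- If W is a proper nonzero 𝔤-submodule of V, then I = span{D(w,w') : w,w' ∈ W} ⊕ W is a homogeneous proper Lie ideal of 𝔨 = 𝔤 ⊕ V.  (Contrapositive of (3) ⟹ (1) of Theorem 3.1.) -/
theorem lts_proper_submodule_gives_proper_homogeneous_ideal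
    [FiniteDimensional ℝ g] [FiniteDimensional ℝ V]
    -- the ad-invariant nondegenerate symmetric bilinear form on 𝔤
    (B : g →ₗ[ℝ] g →ₗ[ℝ] ℝ)
    (hBsymm : ∀ X Y : g, B X Y = B Y X)
    (hBnondeg : ∀ X : g, (∀ Y : g, B X Y = 0) → X = 0)
    (hBinv : ∀ X Y Z : g, B ⁅X, Y⁆ Z + B Y ⁅X, Z⁆ = 0)
    -- the faithful representation of 𝔤 on V
    (ρ : g →ₗ⁅ℝ⁆ Module.End ℝ V)
    (hfaithful : Function.Injective ρ)
    -- the 𝔤-invariant positive-definite symmetric bilinear form on V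
    (ip : V →ₗ[ℝ] V →ₗ[ℝ] ℝ)
    (hipsymm : ∀ v w : V, ip v w = ip w v)
    (hippos : ∀ v : V, v ≠ 0 → 0 < ip v v)
    (hipinv : ∀ (X : g) (v w : V), ip (ρ X v) w + ip v (ρ X w) = 0)
    -- the Faulkner map D, defined by transposing the 𝔤-action
    (D : V →ₗ[ℝ] V →ₗ[ℝ] g)
    (hD : ∀ (v w : V) (X : g), B (D v w) X = ip (ρ X v) w)
    -- cyclicity: [x,y,z] + [y,z,x] + [z,x,y] = 0 (Lie triple system condition)
    (hcyc : ∀ x y z : V, ρ (D x y) z + ρ (D y z) x + ρ (D z x) y = 0)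
    -- W is a proper nonzero 𝔤-submodule of V
    (W : Submodule ℝ V)
    (hWmod : ∀ (X : g), ∀ w ∈ W, ρ X w ∈ W)
    (hWne_bot : W ≠ ⊥) (hWne_top : W ≠ ⊤) :
    -- I = span{D(w,w') : w,w' ∈ W} ⊕ W
      (∀ a : g × V, ∀ b ∈ (Submodule.span ℝ {X : g | ∃ w ∈ W, ∃ w' ∈ W, D w w' = X}).prod W,
        kBracket ρ D a b ∈ (Submodule.span ℝ {X : g | ∃ w ∈ W, ∃ w' ∈ W, D w w' = X}).prod W) ∧
      (∀ p ∈ (Submodule.span ℝ {X : g | ∃ w ∈ W, ∃ w' ∈ W, D w w' = X}).prod W,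
        (p.1, (0 : V)) ∈ (Submodule.span ℝ {X : g | ∃ w ∈ W, ∃ w' ∈ W, D w w' = X}).prod W ∧
        ((0 : g), p.2) ∈ (Submodule.span ℝ {X : g | ∃ w ∈ W, ∃ w' ∈ W, D w w' = X}).prod W) ∧
      (Submodule.span ℝ {X : g | ∃ w ∈ W, ∃ w' ∈ W, D w w' = X}).prod W ≠ ⊥ ∧
      (Submodule.span ℝ {X : g | ∃ w ∈ W, ∃ w' ∈ W, D w w' = X}).prod W ≠ ⊤ := by
  set S : Submodule ℝ g := Submodule.span ℝ {X : g | ∃ w ∈ W, ∃ w' ∈ W, D w w' = X} with hS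
  -- generators are in S
  have hgen : ∀ w ∈ W, ∀ w' ∈ W, D w w' ∈ S := fun w hw w' hw' =>
    Submodule.subset_span ⟨w, hw, w', hw', rfl⟩
  -- elements of S map V into W
  have hact : ∀ Y ∈ S, ∀ v : V, ρ Y v ∈ W := by
    intro Y hY
    induction hY using Submodule.span_induction with
    | mem X hX =>
      obtain ⟨w, hw, w', hw', rfl⟩ := hX
      intro v
      have h := hcyc w w' v
      have ha : ρ (D w w') v = -(ρ (D w' v) w + ρ (D v w) w') :=
        eq_neg_of_add_eq_zero_left (by rw [← add_assoc]; exact h)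
      rw [ha]
      exact neg_mem (add_mem (hWmod _ _ hw) (hWmod _ _ hw'))
    | zero => intro v; simp
    | add X Y _ _ hX hY => intro v; simpa using add_mem (hX v) (hY v)
    | smul c X _ hX => intro v; simpa using Submodule.smul_mem _ c (hX v)
  -- equivariance of D
  have hBinv' : ∀ X Y Z : g, B ⁅X, Y⁆ Z = -B Y ⁅X, Z⁆ := by
    intro X Y Z; linear_combination hBinv X Y Z
  have hipinv' : ∀ (X : g) (v w : V), ip (ρ X v) w = -ip v (ρ X w) := by
    intro X v w; linear_combination hipinv X v w
  have hequiv : ∀ (X : g) (v w : V), ⁅X, D v w⁆ = D (ρ X v) w + D v (ρ X w) := by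
    intro X v w
    have : ⁅X, D v w⁆ - (D (ρ X v) w + D v (ρ X w)) = 0 := by
      apply hBnondeg
      intro Z
      have h1 : B ⁅X, D v w⁆ Z = -ip (ρ ⁅X, Z⁆ v) w := by rw [hBinv', hD]
      have h2 : ρ ⁅X, Z⁆ v = ρ X (ρ Z v) - ρ Z (ρ X v) := by
        rw [LieHom.map_lie]; rfl
      have h3 : ip (ρ X (ρ Z v)) w = -ip (ρ Z v) (ρ X w) := hipinv' _ _ _
      have h4 : B (D (ρ X v) w) Z = ip (ρ Z (ρ X v)) w := hD _ _ _
      have h5 : B (D v (ρ X w)) Z = ip (ρ Z v) (ρ X w) := hD _ _ _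
      simp only [map_sub, LinearMap.sub_apply, map_add, LinearMap.add_apply]
      rw [h1, h2]
      simp only [map_sub, LinearMap.sub_apply] at *
      rw [h3] at *
      linarith [h4, h5]
    exact sub_eq_zero.mp this
  -- S is a Lie ideal of g
  have hideal : ∀ X : g, ∀ Y ∈ S, ⁅X, Y⁆ ∈ S := by
    intro X Y hY
    induction hY using Submodule.span_induction with
    | mem Z hZ =>
      obtain ⟨w, hw, w', hw', rfl⟩ := hZ
      rw [hequiv]
      exact add_mem (hgen _ (hWmod _ _ hw) _ hw') (hgen _ hw _ (hWmod _ _ hw'))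
    | zero => simp
    | add Y Z _ _ hY hZ => rw [lie_add]; exact add_mem hY hZ
    | smul c Y _ hY => rw [lie_smul]; exact Submodule.smul_mem _ c hY
  -- orthogonal complement machinery
  have hrefl : LinearMap.IsRefl ip := fun v w h => by rw [hipsymm]; exact h
  have hrestrict : (LinearMap.BilinForm.restrict ip W).Nondegenerate := by
    constructor
    all_goals
      intro m hm
      by_contra hne
      have : (m : V) ≠ 0 := fun h => hne (Subtype.ext h)
      have := hippos m this
      have := hm m
      simp [LinearMap.BilinForm.restrict_apply] at this
      linarith
  have hcompl : IsCompl W (LinearMap.BilinForm.orthogonal ip W) :=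
    LinearMap.BilinForm.isCompl_orthogonal_of_restrict_nondegenerate hrefl hrestrict
  -- D v u ∈ S for any v and u ∈ W
  have hDW : ∀ (v : V), ∀ u ∈ W, D v u ∈ S := by
    intro v u hu
    have hv : v ∈ W ⊔ LinearMap.BilinForm.orthogonal ip W := by
      rw [hcompl.sup_eq_top]; trivial
    obtain ⟨a, ha, b, hb, rfl⟩ := Submodule.mem_sup.mp hv
    have hbu : D b u = 0 := by
      apply hBnondeg
      intro Z
      rw [hD]
      have : ip (ρ Z b) u = -ip (ρ Z u) b := by
        rw [hipinv' Z b u, hipsymm]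
      rw [this, hb _ (hWmod Z u hu)]
      ring
    rw [map_add, LinearMap.add_apply, hbu, add_zero]
    exact hgen a ha u hu
  refine ⟨?_, ?_, ?_, ?_⟩
  · rintro a b ⟨hb1, hb2⟩
    exact ⟨add_mem (hideal a.1 b.1 hb1) (hDW a.2 b.2 hb2),
      sub_mem (hWmod a.1 b.2 hb2) (hact b.1 hb1 a.2)⟩
  · rintro p ⟨hp1, hp2⟩
    exact ⟨⟨hp1, W.zero_mem⟩, ⟨S.zero_mem, hp2⟩⟩
  · obtain ⟨w, hw, hwne⟩ := Submodule.exists_mem_ne_zero_of_ne_bot hWne_bot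
    intro h
    have : ((0 : g), w) ∈ (⊥ : Submodule ℝ (g × V)) := h ▸ ⟨S.zero_mem, hw⟩
    rw [Submodule.mem_bot] at this
    exact hwne (congrArg Prod.snd this)
  · intro h
    apply hWne_top
    rw [Submodule.eq_top_iff']
    intro v
    have : ((0 : g), v) ∈ S.prod W := h ▸ Submodule.mem_top
    exact this.2
end

section
/- Assume V is irreducible as a 𝔤-module. Then every homogeneous Lie ideal of 𝔨 = 𝔤 ⊕ V, i.e. every Lie ideal of the form I₀ ⊕ I₁ with I₀ ⊆ 𝔤 and I₁ ⊆ V, is either 0 or all of 𝔨. (This is the implication (1)⟹(3) of Theorem 3.1.) -/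
variable {g V : Type*} [LieRing g] [LieAlgebra ℝ g] [AddCommGroup V] [Module ℝ V]

attribute [local instance 100] LieRing.ofAssociativeRing

/-- If V is irreducible as a 𝔤-module, then every homogeneous Lie ideal of 𝔨 = 𝔤 ⊕ V is 0 or all of 𝔨.  (Implication (1) ⟹ (3) of Theorem 3.1.) -/
theorem lts_irreducible_implies_graded_simple
    [FiniteDimensional ℝ g] [FiniteDimensional ℝ V]
    -- the ad-invariant nondegenerate symmetric bilinear form on 𝔤
    (B : g →ₗ[ℝ] g →ₗ[ℝ] ℝ)
    (hBsymm : ∀ X Y : g, B X Y = B Y X)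
    (hBnondeg : ∀ X : g, (∀ Y : g, B X Y = 0) → X = 0)
    (hBinv : ∀ X Y Z : g, B ⁅X, Y⁆ Z + B Y ⁅X, Z⁆ = 0)
    -- the faithful representation of 𝔤 on V
    (ρ : g →ₗ⁅ℝ⁆ Module.End ℝ V)
    (hfaithful : Function.Injective ρ)
    -- the 𝔤-invariant positive-definite symmetric bilinear form on V
    (ip : V →ₗ[ℝ] V →ₗ[ℝ] ℝ)
    (hipsymm : ∀ v w : V, ip v w = ip w v)
    (hippos : ∀ v : V, v ≠ 0 → 0 < ip v v)
    (hipinv : ∀ (X : g) (v w : V), ip (ρ X v) w + ip v (ρ X w) = 0)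
    -- the Faulkner map D, defined by transposing the 𝔤-action
    (D : V →ₗ[ℝ] V →ₗ[ℝ] g)
    (hD : ∀ (v w : V) (X : g), B (D v w) X = ip (ρ X v) w)
    -- cyclicity: [x,y,z] + [y,z,x] + [z,x,y] = 0 (Lie triple system condition)
    (hcyc : ∀ x y z : V, ρ (D x y) z + ρ (D y z) x + ρ (D z x) y = 0)
    -- V is irreducible as a 𝔤-module
    (hirr : ∀ U : Submodule ℝ V, (∀ (X : g), ∀ u ∈ U, ρ X u ∈ U) → U = ⊥ ∨ U = ⊤) :
    ∀ I : Submodule ℝ (g × V),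
      -- I is homogeneous: I = (I ∩ 𝔤) ⊕ (I ∩ V)
      (∀ p ∈ I, (p.1, (0 : V)) ∈ I ∧ ((0 : g), p.2) ∈ I) →
      -- I is a Lie ideal of 𝔨
      (∀ a : g × V, ∀ b ∈ I, kBracket ρ D a b ∈ I) →
      I = ⊥ ∨ I = ⊤ := by
  intro I hhom hideal
  -- ρ X v = 0 for all v implies X = 0
  have hker : ∀ X : g, (∀ v : V, ρ X v = 0) → X = 0 := by
    intro X h
    have : ρ X = ρ 0 := by
      rw [map_zero]; ext v; simpa using h v
    exact hfaithful this
  set I1 : Submodule ℝ V := I.comap (LinearMap.inr ℝ g V) with hI1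
  have hI1mem : ∀ v : V, v ∈ I1 ↔ ((0 : g), v) ∈ I := fun v => Iff.rfl
  -- I1 is g-invariant
  have hinv1 : ∀ (X : g), ∀ u ∈ I1, ρ X u ∈ I1 := by
    intro X u hu
    have h := hideal (X, 0) ((0 : g), u) ((hI1mem u).1 hu)
    have : kBracket ρ D (X, 0) ((0 : g), u) = ((0 : g), ρ X u) := by
      simp [kBracket]
    rw [this] at h
    exact h
  rcases hirr I1 hinv1 with hbot | htop
  · left
    rw [Submodule.eq_bot_iff]
    intro p hp
    obtain ⟨h1, h2⟩ := hhom p hp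
    have hp2 : p.2 = 0 := by
      have : p.2 ∈ I1 := h2
      simpa [hbot] using this
    have hp1 : p.1 = 0 := by
      apply hker
      intro v
      have h := hideal ((0 : g), v) (p.1, 0) h1
      have he : kBracket ρ D ((0 : g), v) (p.1, 0) = ((0 : g), -(ρ p.1 v)) := by
        simp [kBracket]
      rw [he] at h
      have : -(ρ p.1 v) ∈ I1 := h
      rw [hbot] at this
      simpa using this
    have hp0 : p = 0 := Prod.ext hp1 hp2
    rw [hp0]
  · right
    -- every D v w ∈ I0
    have hDmem : ∀ v w : V, ((D v w, (0 : V)) : g × V) ∈ I := by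
      intro v w
      have hw : ((0 : g), w) ∈ I := by
        have : w ∈ I1 := by rw [htop]; trivial
        exact this
      have h := hideal ((0 : g), v) ((0 : g), w) hw
      have he : kBracket ρ D ((0 : g), v) ((0 : g), w) = ((D v w, (0 : V)) : g × V) := by
        simp [kBracket]
      rwa [he] at h
    set W : Submodule ℝ g := I.comap (LinearMap.inl ℝ g V) with hW
    have hWD : ∀ v w : V, D v w ∈ W := fun v w => hDmem v w
    have hWtop : W = ⊤ := by
      have hinj : Function.Injective (W.subtype.dualMap ∘ₗ (B : g →ₗ[ℝ] Module.Dual ℝ g)) := by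
        rw [← LinearMap.ker_eq_bot, Submodule.eq_bot_iff]
        intro X hX
        have hX' : ∀ y : W, B X (y : g) = 0 := by
          intro y
          have := LinearMap.congr_fun (LinearMap.mem_ker.1 hX) y
          simpa using this
        apply hker
        intro v
        by_contra hne
        have h1 : B X (D v (ρ X v)) = 0 := hX' ⟨D v (ρ X v), hWD v (ρ X v)⟩
        have h2 : B (D v (ρ X v)) X = ip (ρ X v) (ρ X v) := hD v (ρ X v) X
        rw [hBsymm] at h1
        rw [h1] at h2
        exact absurd h2.symm (ne_of_gt (hippos _ hne))
      have hle : Module.finrank ℝ g ≤ Module.finrank ℝ W := by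
        calc Module.finrank ℝ g ≤ Module.finrank ℝ (Module.Dual ℝ W) :=
              LinearMap.finrank_le_finrank_of_injective hinj
          _ = Module.finrank ℝ W := Subspace.dual_finrank_eq
      exact Submodule.eq_top_of_finrank_eq (le_antisymm (Submodule.finrank_le W) hle)
    rw [Submodule.eq_top_iff']
    intro p
    have h1 : ((p.1, (0 : V)) : g × V) ∈ I := by
      have : p.1 ∈ W := by rw [hWtop]; trivial
      exact this
    have h2 : (((0 : g), p.2) : g × V) ∈ I := by
      have : p.2 ∈ I1 := by rw [htop]; trivial
      exact this
    have := I.add_mem h1 h2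
    simpa using this
end

section
/- Assume V is irreducible as a 𝔤-module. Then either the only Lie ideals of 𝔨 = 𝔤 ⊕ V are 0 and 𝔨, or there exists a 𝔤-equivariant linear isomorphism φ : V → 𝔤 (where 𝔤 carries its adjoint representation) and 𝔤 has no Lie ideals other than 0 and 𝔤. (This is the strengthened implication (1)⟹(3)′ of Theorem 3.1.) -/
variable {g V : Type*} [LieRing g] [LieAlgebra ℝ g] [AddCommGroup V] [Module ℝ V]

attribute [local instance 100] LieRing.ofAssociativeRing

/-- Positive definiteness gives nondegeneracy of the inner product. -/
lemma ip_nondeg (ip : V →ₗ[ℝ] V →ₗ[ℝ] ℝ)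
    (hippos : ∀ v : V, v ≠ 0 → 0 < ip v v)
    (v : V) (h : ∀ w : V, ip v w = 0) : v = 0 := by
  by_contra hv
  have := hippos v hv
  rw [h v] at this
  exact lt_irrefl 0 this

/-- Any submodule of 𝔤 containing all `D v w` is all of 𝔤. -/
lemma Dspan_top
    [FiniteDimensional ℝ g]
    (B : g →ₗ[ℝ] g →ₗ[ℝ] ℝ)
    (hBsymm : ∀ X Y : g, B X Y = B Y X)
    (hBnondeg : ∀ X : g, (∀ Y : g, B X Y = 0) → X = 0)
    (ρ : g →ₗ⁅ℝ⁆ Module.End ℝ V)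
    (hfaithful : Function.Injective ρ)
    (ip : V →ₗ[ℝ] V →ₗ[ℝ] ℝ)
    (hippos : ∀ v : V, v ≠ 0 → 0 < ip v v)
    (D : V →ₗ[ℝ] V →ₗ[ℝ] g)
    (hD : ∀ (v w : V) (X : g), B (D v w) X = ip (ρ X v) w)
    (S : Submodule ℝ g) (hS : ∀ v w : V, D v w ∈ S) : S = ⊤ := by
  by_contra hne
  obtain ⟨f, hf0, hfbot⟩ :=
    S.exists_dual_map_eq_bot_of_lt_top (lt_top_iff_ne_top.mpr hne) inferInstance
  -- B : g →ₗ Dual ℝ g is injective hence surjective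
  have hBinj : Function.Injective (B : g →ₗ[ℝ] Module.Dual ℝ g) := by
    intro X Y h
    have h0 : ∀ Z, B (X - Y) Z = 0 := by
      intro Z
      simp only [map_sub, LinearMap.sub_apply, h, sub_self, LinearMap.zero_apply]
    exact sub_eq_zero.mp (hBnondeg _ h0)
  have hdim : Module.finrank ℝ g = Module.finrank ℝ (Module.Dual ℝ g) :=
    (Subspace.dual_finrank_eq (K := ℝ) (V := g)).symm
  have hBsurj : Function.Surjective (B : g →ₗ[ℝ] Module.Dual ℝ g) :=
    (LinearMap.injective_iff_surjective_of_finrank_eq_finrank hdim).mp hBinj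
  obtain ⟨X, hX⟩ := hBsurj f
  have hXne : X ≠ 0 := by
    rintro rfl
    apply hf0
    rw [← hX, map_zero]
  -- f vanishes on S
  have hfS : ∀ Y ∈ S, f Y = 0 := by
    intro Y hY
    have : f Y ∈ S.map f := Submodule.mem_map_of_mem hY
    rwa [hfbot, Submodule.mem_bot] at this
  have hip0 : ∀ v w : V, ip (ρ X v) w = 0 := by
    intro v w
    rw [← hD v w X, hBsymm, hX]
    exact hfS _ (hS v w)
  have hρ0 : ρ X = 0 := by
    ext v
    exact ip_nondeg ip hippos _ (hip0 v)
  exact hXne (hfaithful (by rw [hρ0, map_zero]))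

/-- If V is irreducible as a 𝔤-module, then either the only Lie ideals of 𝔨 = 𝔤 ⊕ V are 0 and 𝔨, or V ≅ 𝔤 equivariantly and 𝔤 has no Lie ideals other than 0 and 𝔤.  (Strengthened implication (1) ⟹ (3)' of Theorem 3.1.) -/
theorem lts_irreducible_implies_simple_or_adjoint
    [FiniteDimensional ℝ g] [FiniteDimensional ℝ V]
    -- the ad-invariant nondegenerate symmetric bilinear form on 𝔤
    (B : g →ₗ[ℝ] g →ₗ[ℝ] ℝ)
    (hBsymm : ∀ X Y : g, B X Y = B Y X)
    (hBnondeg : ∀ X : g, (∀ Y : g, B X Y = 0) → X = 0)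
    (hBinv : ∀ X Y Z : g, B ⁅X, Y⁆ Z + B Y ⁅X, Z⁆ = 0)
    -- the faithful representation of 𝔤 on V
    (ρ : g →ₗ⁅ℝ⁆ Module.End ℝ V)
    (hfaithful : Function.Injective ρ)
    -- the 𝔤-invariant positive-definite symmetric bilinear form on V
    (ip : V →ₗ[ℝ] V →ₗ[ℝ] ℝ)
    (hipsymm : ∀ v w : V, ip v w = ip w v)
    (hippos : ∀ v : V, v ≠ 0 → 0 < ip v v)
    (hipinv : ∀ (X : g) (v w : V), ip (ρ X v) w + ip v (ρ X w) = 0)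
    -- the Faulkner map D, defined by transposing the 𝔤-action
    (D : V →ₗ[ℝ] V →ₗ[ℝ] g)
    (hD : ∀ (v w : V) (X : g), B (D v w) X = ip (ρ X v) w)
    -- cyclicity: [x,y,z] + [y,z,x] + [z,x,y] = 0 (Lie triple system condition)
    (hcyc : ∀ x y z : V, ρ (D x y) z + ρ (D y z) x + ρ (D z x) y = 0)
    -- V is irreducible as a 𝔤-module
    (hirr : ∀ U : Submodule ℝ V, (∀ (X : g), ∀ u ∈ U, ρ X u ∈ U) → U = ⊥ ∨ U = ⊤) :
    -- either 𝔨 has no proper Lie ideals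
      (∀ I : Submodule ℝ (g × V), (∀ a : g × V, ∀ b ∈ I, kBracket ρ D a b ∈ I) → I = ⊥ ∨ I = ⊤) ∨
      -- or V ≅ 𝔤 as 𝔤-modules (𝔤 with its adjoint representation) and 𝔤 has no proper Lie ideals
      (∃ φ : V ≃ₗ[ℝ] g, (∀ (X : g) (v : V), φ (ρ X v) = ⁅X, φ v⁆) ∧
        (∀ I : Submodule ℝ g, (∀ X : g, ∀ Y ∈ I, ⁅X, Y⁆ ∈ I) → I = ⊥ ∨ I = ⊤)) := by
  by_cases hk : ∀ I : Submodule ℝ (g × V),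
      (∀ a : g × V, ∀ b ∈ I, kBracket ρ D a b ∈ I) → I = ⊥ ∨ I = ⊤
  · exact Or.inl hk
  right
  push_neg at hk
  obtain ⟨I, hI, hIbot, hItop⟩ := hk
  -- W₀ = {v | (0,v) ∈ I}, a 𝔤-submodule of V
  set W₀ : Submodule ℝ V := I.comap (LinearMap.inr ℝ g V) with hW₀def
  have hW₀mem : ∀ v : V, v ∈ W₀ ↔ ((0 : g), v) ∈ I := fun v => Iff.rfl
  have hW₀inv : ∀ (X : g), ∀ u ∈ W₀, ρ X u ∈ W₀ := by
    intro X u hu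
    rw [hW₀mem] at hu ⊢
    have := hI (X, 0) _ hu
    simpa [kBracket] using this
  rcases hirr W₀ hW₀inv with hW₀ | hW₀
  · -- W₀ = ⊥ : I is a graph of an iso V ≃ g
    -- First, I ∩ (g × 0) = 0
    have hG : ∀ X : g, (X, (0 : V)) ∈ I → X = 0 := by
      intro X hX
      have hρX : ∀ w : V, ρ X w = 0 := by
        intro w
        have h1 := hI (0, w) _ hX
        have h2 : ((0 : g), -(ρ X w)) ∈ I := by simpa [kBracket] using h1
        have h3 : -(ρ X w) ∈ W₀ := (hW₀mem _).mpr h2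
        rw [hW₀, Submodule.mem_bot] at h3
        simpa using h3
      apply hfaithful
      rw [map_zero]
      ext w
      exact hρX w
    -- W = projection of I to V, 𝔤-invariant
    set W : Submodule ℝ V := I.map (LinearMap.snd ℝ g V) with hWdef
    have hWinv : ∀ (X : g), ∀ u ∈ W, ρ X u ∈ W := by
      intro X u hu
      obtain ⟨p, hp, hpu⟩ := hu
      have hpu' : p.2 = u := hpu
      refine ⟨kBracket ρ D (X, 0) p, hI _ _ hp, ?_⟩
      simp [kBracket, hpu']
    rcases hirr W hWinv with hW | hW
    · -- W = ⊥ forces I = ⊥, contradiction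
      exfalso
      apply hIbot
      rw [Submodule.eq_bot_iff]
      intro p hp
      have h2 : p.2 = 0 := by
        have : p.2 ∈ W := ⟨p, hp, rfl⟩
        rwa [hW, Submodule.mem_bot] at this
      have h1 : p.1 = 0 := hG p.1 (by rwa [← h2, Prod.mk.eta])
      exact Prod.ext h1 h2
    · -- W = ⊤ : construct the graph map ψ
      set s : I →ₗ[ℝ] V := (LinearMap.snd ℝ g V).comp I.subtype with hsdef
      have hsinj : Function.Injective s := by
        intro a b hab
        have h2 : (a : g × V).2 = (b : g × V).2 := hab
        have hsub : ((a : g × V) - b) ∈ I := I.sub_mem a.2 b.2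
        have hsub2 : ((a : g × V) - b).2 = 0 := by
          simp [h2]
        have hsub1 : ((a : g × V) - b).1 = 0 := by
          apply hG
          rw [← hsub2, Prod.mk.eta]
          exact hsub
        have h0 : (a : g × V) - b = 0 := Prod.ext hsub1 hsub2
        exact Subtype.ext (sub_eq_zero.mp h0)
      have hssurj : Function.Surjective s := by
        intro v
        have : v ∈ W := by rw [hW]; trivial
        obtain ⟨p, hp, hpv⟩ := this
        exact ⟨⟨p, hp⟩, hpv⟩
      set e : I ≃ₗ[ℝ] V := LinearEquiv.ofBijective s ⟨hsinj, hssurj⟩ with hedef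
      set ψ : V →ₗ[ℝ] g :=
        ((LinearMap.fst ℝ g V).comp I.subtype).comp e.symm.toLinearMap with hψdef
      have hmem : ∀ v : V, ((ψ v, v) : g × V) ∈ I := by
        intro v
        have h2 : ((e.symm v : I) : g × V).2 = v := e.apply_symm_apply v
        have h1 : ((e.symm v : I) : g × V).1 = ψ v := rfl
        have : ((e.symm v : I) : g × V) = (ψ v, v) := Prod.ext h1 h2
        rw [← this]
        exact (e.symm v).2
      have huniq : ∀ (X : g) (v : V), (X, v) ∈ I → X = ψ v := by
        intro X v h
        have hsub : ((X - ψ v, (0 : V)) : g × V) ∈ I := by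
          have := I.sub_mem h (hmem v)
          simpa using this
        exact sub_eq_zero.mp (hG _ hsub)
      have hequiv : ∀ (X : g) (v : V), ψ (ρ X v) = ⁅X, ψ v⁆ := by
        intro X v
        have h1 := hI (X, 0) _ (hmem v)
        have h2 : ((⁅X, ψ v⁆, ρ X v) : g × V) ∈ I := by
          simpa [kBracket] using h1
        exact (huniq _ _ h2).symm
      have hψinj : Function.Injective ψ := by
        intro a b hab
        have hsub : ψ (a - b) = 0 := by rw [map_sub, hab, sub_self]
        have : ((0 : g), a - b) ∈ I := by
          have := hmem (a - b)
          rwa [hsub] at this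
        have : a - b ∈ W₀ := (hW₀mem _).mpr this
        rw [hW₀, Submodule.mem_bot] at this
        exact sub_eq_zero.mp this
      have hψsurj : Function.Surjective ψ := by
        rw [← LinearMap.range_eq_top]
        apply Dspan_top B hBsymm hBnondeg ρ hfaithful ip hippos D hD
        intro w v
        have h1 := hI (ψ w, w) _ (hmem v)
        have h2 : ((⁅ψ w, ψ v⁆ + D w v, ρ (ψ w) v - ρ (ψ v) w) : g × V) ∈ I := h1
        have h3 : ⁅ψ w, ψ v⁆ + D w v = ψ (ρ (ψ w) v - ρ (ψ v) w) := huniq _ _ h2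
        have h4 : ⁅ψ w, ψ v⁆ = ψ (ρ (ψ w) v) := (hequiv (ψ w) v).symm
        have h5 : D w v = -(ψ (ρ (ψ v) w)) := by
          rw [map_sub, ← h4, sub_eq_add_neg] at h3
          exact add_left_cancel h3
        refine ⟨-(ρ (ψ v) w), ?_⟩
        rw [map_neg]
        exact h5.symm
      refine ⟨LinearEquiv.ofBijective ψ ⟨hψinj, hψsurj⟩, hequiv, ?_⟩
      -- 𝔤 simplicity
      intro J hJ
      set U : Submodule ℝ V := J.comap ψ with hUdef
      have hUinv : ∀ (X : g), ∀ u ∈ U, ρ X u ∈ U := by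
        intro X u hu
        have : ψ u ∈ J := hu
        have h2 : ⁅X, ψ u⁆ ∈ J := hJ X _ this
        show ψ (ρ X u) ∈ J
        rwa [hequiv]
      rcases hirr U hUinv with hU | hU
      · left
        rw [Submodule.eq_bot_iff]
        intro Y hY
        obtain ⟨v, rfl⟩ := hψsurj Y
        have : v ∈ U := hY
        rw [hU, Submodule.mem_bot] at this
        rw [this, map_zero]
      · right
        rw [Submodule.eq_top_iff']
        intro Y
        obtain ⟨v, rfl⟩ := hψsurj Y
        have : v ∈ U := by rw [hU]; trivial
        exact this
  · -- W₀ = ⊤ : I contains all of V, hence all D v w, hence all of g : I = ⊤, contradiction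
    exfalso
    apply hItop
    have hV : ∀ v : V, ((0 : g), v) ∈ I := by
      intro v
      have : v ∈ W₀ := by rw [hW₀]; trivial
      exact (hW₀mem _).mp this
    have hDmem : ∀ w v : V, ((D w v : g), (0 : V)) ∈ I := by
      intro w v
      have := hI (0, w) _ (hV v)
      simpa [kBracket] using this
    set S : Submodule ℝ g := I.comap (LinearMap.inl ℝ g V) with hSdef
    have hStop : S = ⊤ :=
      Dspan_top B hBsymm hBnondeg ρ hfaithful ip hippos D hD S (fun v w => hDmem v w)
    rw [Submodule.eq_top_iff']
    intro p
    have h1 : (p.1, (0 : V)) ∈ I := by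
      have : p.1 ∈ S := by rw [hStop]; trivial
      exact this
    have h2 := I.add_mem h1 (hV p.2)
    simpa using h2
end

section
/- Let U ⊆ V be a complex subspace such that [u,x;y] ∈ U for all u ∈ U and x,y ∈ V, and let U^⊥ be its orthogonal complement with respect to h. Then for all z ∈ V, u ∈ U and v ∈ U^⊥ one has [z,u;v] = 0 and [z,v;u] = 0; consequently both U and U^⊥ are ideals of the N=6 triple system and V decomposes as their perpendicular direct sum, with [x,y;z] ∈ U whenever x,y,z ∈ U and [x,y;z] ∈ U^⊥ whenever x,y,z ∈ U^⊥. -/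
/-- If U is a complex subspace of the positive-definite N=6 triple system V with [u,x;y] ∈ U for all u ∈ U and x,y ∈ V, then the mixed brackets between U and U^⊥ vanish, both U and U^⊥ are ideals, and V decomposes as their perpendicular direct sum. -/
theorem n6_submodule_gives_perpendicular_ideal_decomposition
    {V : Type*} [AddCommGroup V] [Module ℂ V] [FiniteDimensional ℂ V]
    -- the positive-definite hermitian inner product (linear in the first argument,
    -- antilinear in the second)
    (h : V → V → ℂ)
    (hlin : ∀ (a : ℂ) (u u' v : V), h (a • u + u') v = a * h u v + h u' v)
    (hherm : ∀ u v : V, h u v = (starRingEnd ℂ) (h v u))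
    (hpos : ∀ v : V, v ≠ 0 → 0 < (h v v).re)
    -- the triple bracket [-,-;-], complex linear in its first two arguments and
    -- complex antilinear in its third
    (T : V → V → V → V)
    (hT1 : ∀ (a : ℂ) (x x' y z : V), T (a • x + x') y z = a • T x y z + T x' y z)
    (hT2 : ∀ (a : ℂ) (x y y' z : V), T x (a • y + y') z = a • T x y z + T x y' z)
    (hT3 : ∀ (a : ℂ) (x y z z' : V),
      T x y (a • z + z') = (starRingEnd ℂ) a • T x y z + T x y z')
    -- unitarity: h([x,v;w],y) = h(x,[y,w;v])
    (hunit : ∀ x v w y : V, h (T x v w) y = h x (T y w v))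
    -- symmetry: h([x,v;w],y) = h([v,x;y],w)
    (hsym : ∀ x v w y : V, h (T x v w) y = h (T v x y) w)
    -- fundamental identity
    (hFI : ∀ z v w x y : V,
      T (T z v w) x y - T (T z x y) v w - T z (T v x y) w + T z v (T w y x) = 0)
    -- skewsymmetry: [x,y;z] = -[y,x;z]
    (hskew : ∀ x y z : V, T x y z = - T y x z)
    -- U is a complex subspace with [u,x;y] ∈ U for all u ∈ U, x, y ∈ V
    (U : Submodule ℂ V)
    (hU : ∀ u ∈ U, ∀ x y : V, T u x y ∈ U) :
    -- [z,u;v] = 0 and [z,v;u] = 0 for u ∈ U, v ∈ U^⊥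
      (∀ z : V, ∀ u ∈ U, ∀ v : V, (∀ u' ∈ U, h u' v = 0) → T z u v = 0 ∧ T z v u = 0) ∧
      -- U is an ideal
      (∀ u ∈ U, ∀ x y : V, T u x y ∈ U ∧ T x y u ∈ U) ∧
      -- U^⊥ is an ideal
      (∀ v : V, (∀ u ∈ U, h u v = 0) → ∀ x y : V,
        (∀ u ∈ U, h u (T v x y) = 0) ∧ (∀ u ∈ U, h u (T x y v) = 0)) ∧
      -- V = U ⊕ U^⊥ perpendicularly
      (∀ v : V, ∃ u ∈ U, ∃ w : V, (∀ u' ∈ U, h u' w = 0) ∧ v = u + w) ∧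
      (∀ v ∈ U, (∀ u ∈ U, h u v = 0) → v = 0) ∧
      -- [x,y;z] ∈ U whenever x,y,z ∈ U
      (∀ x y z : V, x ∈ U → y ∈ U → z ∈ U → T x y z ∈ U) ∧
      -- [x,y;z] ∈ U^⊥ whenever x,y,z ∈ U^⊥
      (∀ x y z : V, (∀ u ∈ U, h u x = 0) → (∀ u ∈ U, h u y = 0) →
        (∀ u ∈ U, h u z = 0) → ∀ u ∈ U, h u (T x y z) = 0) := by
  classical
  -- basic linearity facts for h
  have h0l : ∀ v : V, h 0 v = 0 := by
    intro v
    have := hlin 1 0 0 v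
    simp only [one_smul, add_zero, one_mul] at this
    exact add_eq_left.mp this.symm
  have hadd : ∀ u u' v : V, h (u + u') v = h u v + h u' v := by
    intro u u' v
    have := hlin 1 u u' v
    simpa using this
  have hsmul : ∀ (a : ℂ) (u v : V), h (a • u) v = a * h u v := by
    intro a u v
    have := hlin a u 0 v
    simpa [h0l] using this
  -- from h w w = 0 deduce w = 0
  have hdef : ∀ w : V, h w w = 0 → w = 0 := by
    intro w hw
    by_contra hne
    have := hpos w hne
    rw [hw] at this
    simp at this
  -- key claim A : T z u v = 0 for u ∈ U, v ⊥ U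
  have keyA : ∀ z : V, ∀ u ∈ U, ∀ v : V, (∀ u' ∈ U, h u' v = 0) → T z u v = 0 := by
    intro z u hu v hv
    apply hdef
    rw [hsym z u v (T z u v)]
    exact hv _ (hU u hu z (T z u v))
  -- key claim B : T z v u = 0 for u ∈ U, v ⊥ U
  have keyB : ∀ z : V, ∀ u ∈ U, ∀ v : V, (∀ u' ∈ U, h u' v = 0) → T z v u = 0 := by
    intro z u hu v hv
    apply hdef
    rw [hsym z v u (T z v u)]
    rw [hherm (T v z (T z v u)) u, ← hunit u (T z v u) z v]
    rw [hv _ (hU u hu (T z v u) z)]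
    simp
  -- orthogonal decomposition via an inner product space structure
  have decomp : ∀ v : V, ∃ u ∈ U, ∃ w : V, (∀ u' ∈ U, h u' w = 0) ∧ v = u + w := by
    letI c : InnerProductSpace.Core ℂ V :=
    { inner := fun x y => h y x
      conj_inner_symm := fun x y => (hherm y x).symm
      re_inner_nonneg := fun x => by
        rcases eq_or_ne x 0 with rfl | hx
        · simp [Inner.inner, h0l]
        · exact le_of_lt (hpos x hx)
      add_left := fun x y z => by
        show h z (x + y) = h z x + h z y
        rw [hherm z (x + y), hadd, map_add, ← hherm, ← hherm]
      smul_left := fun x y r => by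
        show h y (r • x) = (starRingEnd ℂ) r * h y x
        rw [hherm y (r • x), hsmul, map_mul, ← hherm]
      definite := fun x hx => hdef x hx }
    letI : NormedAddCommGroup V := c.toNormedAddCommGroup
    letI : InnerProductSpace ℂ V := InnerProductSpace.ofCore c.toCore
    haveI : CompleteSpace U := FiniteDimensional.complete ℂ U
    intro v
    obtain ⟨u, hu, w, hw, hvw⟩ := U.exists_add_mem_mem_orthogonal v
    refine ⟨u, hu, w, ?_, hvw⟩
    intro u' hu'
    have h1 : h w u' = 0 := (Submodule.mem_orthogonal U w).mp hw u' hu'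
    rw [hherm, h1]
    simp
  -- T x y u ∈ U when u ∈ U
  have third : ∀ x y : V, ∀ u ∈ U, T x y u ∈ U := by
    intro x y u hu
    obtain ⟨p, hp, w, hw, hxw⟩ := decomp x
    have hx : T x y u = T p y u + T w y u := by
      have := hT1 1 p w y u
      simpa [hxw] using this
    have hw0 : T w y u = 0 := by
      rw [hskew w y u, keyB y u hu w hw, neg_zero]
    rw [hx, hw0, add_zero]
    exact hU p hp y u
  refine ⟨fun z u hu v hv => ⟨keyA z u hu v hv, keyB z u hu v hv⟩,
    fun u hu x y => ⟨hU u hu x y, third x y u hu⟩, ?_, decomp, ?_, ?_, ?_⟩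
  · -- U^⊥ is an ideal
    intro v hv x y
    constructor
    · intro u hu
      rw [← hunit u y x v]
      exact hv _ (hU u hu y x)
    · intro u hu
      rw [hherm u (T x y v), hsym x y v u, hv _ (third y x u hu)]
      simp
  · -- definiteness on U
    intro v _ hv
    exact hdef v (hv v ‹v ∈ U›)
  · -- T x y z ∈ U for x,y,z ∈ U
    intro x y z hx _ _
    exact hU x hx y z
  · -- T x y z ⊥ U for x,y,z ⊥ U
    intro x y z hx _ _ u hu
    rw [← hunit u z y x]
    exact hx _ (hU u hu z y)
end

section
/- Let W ⊆ V be a J-stable complex subspace with [x,y,w] ∈ W for all x,y ∈ V and w ∈ W, and let W^⊥ be its orthogonal complement with respect to h. Then [w,x,z] = 0 for all w ∈ W, x ∈ W^⊥ and z ∈ V. -/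
/-- If W is a J-stable subspace of the positive-definite quaternionic anti-Lie triple system V with [x,y,w] ∈ W for all x,y ∈ V, w ∈ W, then [w,x,z] = 0 for all w ∈ W, x ∈ W^⊥ and z ∈ V. -/
theorem quaternionic_alts_perp_bracket_vanishes
    {V : Type*} [AddCommGroup V] [Module ℂ V] [FiniteDimensional ℂ V]
    -- the positive-definite hermitian inner product (linear in the first argument,
    -- antilinear in the second)
    (h : V → V → ℂ)
    (hlin : ∀ (a : ℂ) (u u' v : V), h (a • u + u') v = a * h u v + h u' v)
    (hherm : ∀ u v : V, h u v = (starRingEnd ℂ) (h v u))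
    (hpos : ∀ v : V, v ≠ 0 → 0 < (h v v).re)
    -- the quaternionic structure map J; ω(u,v) := h(u, Jv)
    (J : V → V)
    (hJadd : ∀ u v : V, J (u + v) = J u + J v)
    (hJsmul : ∀ (a : ℂ) (v : V), J (a • v) = (starRingEnd ℂ) a • J v)
    (hJsq : ∀ v : V, J (J v) = -v)
    (hJh : ∀ u v : V, h (J u) (J v) = h v u)
    -- the complex trilinear bracket
    (T : V → V → V → V)
    (hT1 : ∀ (a : ℂ) (x x' y z : V), T (a • x + x') y z = a • T x y z + T x' y z)
    (hT2 : ∀ (a : ℂ) (x y y' z : V), T x (a • y + y') z = a • T x y z + T x y' z)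
    (hT3 : ∀ (a : ℂ) (x y z z' : V), T x y (a • z + z') = a • T x y z + T x y z')
    -- symplecticity: [x,y,z] = [y,x,z]
    (hsympl : ∀ x y z : V, T x y z = T y x z)
    -- symmetry: ω([x,y,z],w) = ω([z,w,x],y)
    (hsym : ∀ x y z w : V, h (T x y z) (J w) = h (T z w x) (J y))
    -- fundamental identity
    (hFI : ∀ v x w y z : V,
      T v x (T w y z) - T w y (T v x z) - T (T v x w) y z - T w (T v x y) z = 0)
    -- quaternionic condition: J[x,y,z] = [Jx,Jy,Jz]
    (hquat : ∀ x y z : V, J (T x y z) = T (J x) (J y) (J z))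
    -- cyclicity (anti-Lie triple system condition)
    (hcyc : ∀ x y z : V, T x y z + T y z x + T z x y = 0)
    -- W is a J-stable complex subspace closed under the bracket in the third slot
    (W : Submodule ℂ V)
    (hWJ : ∀ w ∈ W, J w ∈ W)
    (hW : ∀ x y : V, ∀ w ∈ W, T x y w ∈ W) :
    ∀ w ∈ W, ∀ x : V, (∀ u ∈ W, h u x = 0) → ∀ z : V, T w x z = 0 := by
  intro w hw x hx z
  -- basic facts
  have h0 : ∀ v : V, h 0 v = 0 := by
    intro v
    have := hlin (-1) v v v
    simpa using this
  have hneg : ∀ u v : V, h (-u) v = - h u v := by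
    intro u v
    have := hlin (-1) u 0 v
    simpa [h0] using this
  have hJ0 : J 0 = 0 := by
    have := hJsmul 0 0
    simpa using this
  have hJneg : ∀ v : V, J (-v) = - J v := by
    intro v
    have := hJadd v (-v)
    rw [add_neg_cancel, hJ0] at this
    exact (neg_eq_of_add_eq_zero_right this.symm).symm
  -- h m (J x) = 0 for m ∈ W
  have hperpJ : ∀ m ∈ W, h m (J x) = 0 := by
    intro m hm
    have h1 : h (J x) (J (-(J m))) = h (-(J m)) x := hJh x (-(J m))
    rw [hJneg, hJsq, neg_neg] at h1
    rw [hneg, hx (J m) (hWJ m hm)] at h1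
    rw [hherm, h1]
    simp
  have key : ∀ u : V, h (T w x z) u = 0 := by
    intro u
    have hv : J (-(J u)) = u := by rw [hJneg, hJsq, neg_neg]
    have hs := hsym w x z (-(J u))
    rw [hv] at hs
    rw [hs, hperpJ _ (hW z (-(J u)) w hw)]
  by_contra hne
  have := hpos _ hne
  rw [key (T w x z)] at this
  simp at this
end
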